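/- Let X be a topological vector space, Y ⊆ X a subspace, and A ⊆ X an open convex set intersecting Y. Suppose that for each Ω(A∩Y)-family {C_α}_{α∈ℝ} of relatively open convex sets in Y there exists an Ω(A)-family {D_α}_{α∈ℝ} of open convex sets in X with ⋃_{γ<α} C_γ ⊆ D_α ∩ Y ⊆ C_α for all α. Then every continuous quasiconvex function f : A ∩ Y → ℝ extends to a continuous quasiconvex function F : A → ℝ. -/

import Mathlib

/-- `D` is an Ω(E)-family in the ambient space: empty intersection, union `E`,
and the closure of `D α` relative to `E` is contained in `D β` whenever `α < β`. -/
def IsOmegaFamily {X : Type*} [TopologicalSpace X] (E : Set X) (D : ℝ → Set X) : Prop :=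
  (⋂ α : ℝ, D α) = ∅ ∧ (⋃ α : ℝ, D α) = E ∧
    ∀ α β : ℝ, α < β → closure (D α) ∩ E ⊆ D β

theorem stmt_17 {X : Type*} [AddCommGroup X] [Module ℝ X] [TopologicalSpace X]
    [IsTopologicalAddGroup X] [ContinuousSMul ℝ X]
    (Y : Submodule ℝ X) (A : Set X) (hAopen : IsOpen A) (hAconv : Convex ℝ A)
    (hne : (A ∩ (Y : Set X)).Nonempty)
    (hyp : ∀ C : ℝ → Set X,
      (∀ α, Convex ℝ (C α) ∧ ∃ G : Set X, IsOpen G ∧ C α = G ∩ (Y : Set X)) →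
      IsOmegaFamily (A ∩ (Y : Set X)) C →
      ∃ D : ℝ → Set X, (∀ α, IsOpen (D α) ∧ Convex ℝ (D α)) ∧
        IsOmegaFamily A D ∧
        ∀ α : ℝ, (⋃ γ < α, C γ) ⊆ D α ∩ (Y : Set X) ∧ D α ∩ (Y : Set X) ⊆ C α) :
    ∀ f : X → ℝ, ContinuousOn f (A ∩ (Y : Set X)) →
      QuasiconvexOn ℝ (A ∩ (Y : Set X)) f →
      ∃ F : X → ℝ, ContinuousOn F A ∧ QuasiconvexOn ℝ A F ∧
        ∀ x ∈ A ∩ (Y : Set X), F x = f x := by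
  intro f hfc hfq
  set s : Set X := A ∩ (Y : Set X) with hs
  -- the sublevel family
  set C : ℝ → Set X := fun α => {x | x ∈ s ∧ f x < α} with hC
  have hCsub : ∀ α, C α ⊆ s := fun α x hx => hx.1
  -- C α is convex and relatively open in Y
  have hC1 : ∀ α, Convex ℝ (C α) ∧ ∃ G : Set X, IsOpen G ∧ C α = G ∩ (Y : Set X) := by
    intro α
    constructor
    · -- convexity
      intro x hx y hy a b ha hb hab
      have hm : max (f x) (f y) < α := max_lt hx.2 hy.2
      have := hfq (max (f x) (f y))
        ⟨hx.1, le_max_left _ _⟩ ⟨hy.1, le_max_right _ _⟩ ha hb hab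
      exact ⟨this.1, lt_of_le_of_lt this.2 hm⟩
    · -- relatively open
      obtain ⟨u, hu, huC⟩ := (continuousOn_iff'.1 hfc) (Set.Iio α) isOpen_Iio
      refine ⟨u ∩ A, hu.inter hAopen, ?_⟩
      ext x
      constructor
      · intro hx
        have : x ∈ u ∩ s := by
          rw [← huC]; exact ⟨hx.2, hx.1⟩
        exact ⟨⟨this.1, hx.1.1⟩, hx.1.2⟩
      · rintro ⟨⟨hxu, hxA⟩, hxY⟩
        have : x ∈ f ⁻¹' Set.Iio α ∩ s := by
          rw [huC]; exact ⟨hxu, hxA, hxY⟩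
        exact ⟨this.2, this.1⟩
  -- C is an Ω(s)-family
  have hC2 : IsOmegaFamily s C := by
    refine ⟨?_, ?_, ?_⟩
    · rw [Set.eq_empty_iff_forall_notMem]
      intro x hx
      have := Set.mem_iInter.1 hx (f x)
      exact lt_irrefl _ this.2
    · apply Set.Subset.antisymm
      · exact Set.iUnion_subset hCsub
      · intro x hx
        exact Set.mem_iUnion.2 ⟨f x + 1, hx, by linarith⟩
    · intro α β hαβ x hx
      refine ⟨hx.2, ?_⟩
      have hcw : ContinuousWithinAt f s x := hfc x hx.2
      have hne' : (nhdsWithin x (C α)).NeBot :=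
        mem_closure_iff_nhdsWithin_neBot.1 hx.1
      have htend : Filter.Tendsto f (nhdsWithin x (C α)) (nhds (f x)) :=
        hcw.mono_left (nhdsWithin_mono x (hCsub α))
      have hle : f x ≤ α := by
        refine le_of_tendsto htend ?_
        filter_upwards [self_mem_nhdsWithin] with y hy
        exact le_of_lt hy.2
      exact lt_of_le_of_lt hle hαβ
  obtain ⟨D, hDoc, ⟨hDint, hDun, hDcl⟩, hsand⟩ := hyp C hC1 hC2
  -- basic facts about D
  have hDsubA : ∀ α, D α ⊆ A := by
    intro α
    rw [← hDun]
    exact Set.subset_iUnion D α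
  have hmono : ∀ {α β : ℝ}, α < β → D α ⊆ D β := by
    intro α β hαβ x hx
    exact hDcl α β hαβ ⟨subset_closure hx, hDsubA α hx⟩
  -- the level-set function
  set F : X → ℝ := fun x => sInf {α | x ∈ D α} with hF
  have hSne : ∀ x ∈ A, {α | x ∈ D α}.Nonempty := by
    intro x hx
    rw [← hDun] at hx
    obtain ⟨α, hα⟩ := Set.mem_iUnion.1 hx
    exact ⟨α, hα⟩
  have hSbdd : ∀ x, BddBelow {α | x ∈ D α} := by
    intro x
    have : ∃ α, x ∉ D α := by
      by_contra h
      push_neg at h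
      have : x ∈ ⋂ α, D α := Set.mem_iInter.2 h
      rw [hDint] at this
      exact this
    obtain ⟨α₀, hα₀⟩ := this
    refine ⟨α₀, fun β hβ => ?_⟩
    by_contra h
    push_neg at h
    exact hα₀ (hmono h hβ)
  have key1 : ∀ x, ∀ α, x ∈ D α → F x ≤ α := fun x α hx => csInf_le (hSbdd x) hx
  have key2 : ∀ x ∈ A, ∀ α, F x < α → x ∈ D α := by
    intro x hx α hlt
    obtain ⟨β, hβ, hβα⟩ := exists_lt_of_csInf_lt (hSne x hx) hlt
    exact hmono hβα hβ
  have key3 : ∀ x ∈ A, ∀ α, (∀ β, α < β → x ∈ D β) → F x ≤ α := by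
    intro x hx α h
    by_contra hcon
    push_neg at hcon
    obtain ⟨β, hβ1, hβ2⟩ := exists_between hcon
    exact absurd (key1 x β (h β hβ1)) (not_le.2 hβ2)
  refine ⟨F, ?_, ?_, ?_⟩
  · -- continuity
    intro x hx
    apply ContinuousAt.continuousWithinAt
    rw [ContinuousAt, Metric.tendsto_nhds]
    intro ε hε
    set a := F x with ha
    set V : Set X := D (a + ε / 2) \ closure (D (a - ε / 2)) with hV
    have hVopen : IsOpen V := (hDoc (a + ε / 2)).1.sdiff isClosed_closure
    have hxV : x ∈ V := by
      constructor
      · exact key2 x hx (a + ε / 2) (by linarith)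
      · intro hcl
        have : x ∈ D (a - ε / 4) :=
          hDcl (a - ε / 2) (a - ε / 4) (by linarith) ⟨hcl, hx⟩
        have := key1 x _ this
        linarith
    filter_upwards [hVopen.mem_nhds hxV] with y hy
    have hyA : y ∈ A := hDsubA _ hy.1
    have h1 : F y ≤ a + ε / 2 := key1 y _ hy.1
    have h2 : a - ε / 2 ≤ F y := by
      by_contra h
      push_neg at h
      exact hy.2 (subset_closure (key2 y hyA _ h))
    rw [Real.dist_eq, abs_sub_lt_iff]
    constructor <;> linarith
  · -- quasiconvexity
    intro b
    have heq : {x ∈ A | F x ≤ b} = ⋂ β ∈ Set.Ioi b, D β := by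
      ext x
      simp only [Set.mem_setOf_eq, Set.mem_iInter, Set.mem_Ioi]
      constructor
      · rintro ⟨hxA, hxF⟩ β hβ
        exact key2 x hxA β (lt_of_le_of_lt hxF hβ)
      · intro h
        have hxA : x ∈ A := hDsubA (b + 1) (h (b + 1) (by linarith))
        exact ⟨hxA, key3 x hxA b fun β hβ => h β hβ⟩
    rw [heq]
    exact convex_iInter₂ fun β _ => (hDoc β).2
  · -- extension
    intro x hx
    have hxA : x ∈ A := hx.1
    have hle : F x ≤ f x := by
      apply key3 x hxA
      intro β hβ
      obtain ⟨γ, hγ1, hγ2⟩ := exists_between hβ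
      have hxC : x ∈ C γ := ⟨hx, hγ1⟩
      have : x ∈ ⋃ γ' < β, C γ' := Set.mem_iUnion₂.2 ⟨γ, hγ2, hxC⟩
      exact ((hsand β).1 this).1
    have hge : f x ≤ F x := by
      apply le_csInf (hSne x hxA)
      intro α hα
      have : x ∈ C α := (hsand α).2 ⟨hα, hx.2⟩
      exact le_of_lt this.2
    linarith
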